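/- Let a ≤ b be real numbers, let w ∈ ℝ, and let z ∈ ℂ \ [a,b] with Im(z) ≠ 0 and Re(z) ≠ w. Set x* := (Re(z)² + Im(z)² − Re(z)·w)/(Re(z) − w). Then sup_{x ∈ [a,b]} |(x − w)/(x − z)| = max{ |a − w|/|a − z| , |b − w|/|b − z| , E }, where E = |z − w|/|Im(z)| if x* ∈ [a,b] and E = 0 otherwise. -/

import Mathlib

set_option maxHeartbeats 1000000 in
theorem sup_h_wz_on_interval (a b w : ℝ) (hab : a ≤ b) (z : ℂ)
    (him : z.im ≠ 0) (hre : z.re ≠ w) :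
    sSup ((fun x : ℝ => ‖((x : ℂ) - (w : ℂ)) / ((x : ℂ) - z)‖) '' Set.Icc a b) =
      max (max (|a - w| / ‖(a : ℂ) - z‖) (|b - w| / ‖(b : ℂ) - z‖))
        (if (z.re ^ 2 + z.im ^ 2 - z.re * w) / (z.re - w) ∈ Set.Icc a b then
          ‖z - (w : ℂ)‖ / |z.im| else 0) := by
  set r := z.re with hr
  set i := z.im with hi
  have hi2 : (0:ℝ) < i ^ 2 := by positivity
  have hp : r - w ≠ 0 := sub_ne_zero.mpr hre
  set s := (r ^ 2 + i ^ 2 - r * w) / (r - w) with hs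
  have hsrel : (s - r) * (r - w) = i ^ 2 := by
    rw [hs]; field_simp
    ring
  have hswrel : (s - w) * (r - w) = (r - w) ^ 2 + i ^ 2 := by
    linear_combination hsrel
  clear_value s
  clear hs
  have hD : ∀ x : ℝ, (0:ℝ) < (x - r) ^ 2 + i ^ 2 := fun x => by positivity
  set G : ℝ → ℝ := fun x => Real.sqrt ((x - w) ^ 2 / ((x - r) ^ 2 + i ^ 2)) with hG
  have hnormz : ∀ x : ℝ, ‖(x:ℂ) - z‖ = Real.sqrt ((x - r) ^ 2 + i ^ 2) := by
    intro x
    rw [Complex.norm_def, Complex.normSq_apply]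
    congr 1
    simp [← hr, ← hi]
    ring
  have hF : ∀ x : ℝ, |x - w| / ‖(x:ℂ) - z‖ = G x := by
    intro x
    have h1 : G x = Real.sqrt ((x - w) ^ 2 / ((x - r) ^ 2 + i ^ 2)) := rfl
    rw [hnormz x, h1, Real.sqrt_div (sq_nonneg _), Real.sqrt_sq_eq_abs]
  have hFnorm : ∀ x : ℝ, ‖((x : ℂ) - (w : ℂ)) / ((x : ℂ) - z)‖ = G x := by
    intro x
    rw [norm_div]
    have hx : (x:ℂ) - (w:ℂ) = ((x - w : ℝ) : ℂ) := by push_cast; ring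
    rw [hx, Complex.norm_real, Real.norm_eq_abs, hF x]
  have hM : ‖z - (w:ℂ)‖ / |i| = Real.sqrt (((r - w) ^ 2 + i ^ 2) / i ^ 2) := by
    have h1 : ‖z - (w:ℂ)‖ = Real.sqrt ((r - w) ^ 2 + i ^ 2) := by
      rw [Complex.norm_def, Complex.normSq_apply]
      congr 1
      simp [← hr, ← hi]
      ring
    rw [h1, Real.sqrt_div (by positivity), Real.sqrt_sq_eq_abs]
  have key : ∀ x c : ℝ, (x - w) ^ 2 * ((c - r) ^ 2 + i ^ 2) ≤
      (c - w) ^ 2 * ((x - r) ^ 2 + i ^ 2) → G x ≤ G c := by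
    intro x c h
    apply Real.sqrt_le_sqrt
    rw [div_le_div_iff₀ (hD x) (hD c)]
    exact h
  have hbound : ∀ x : ℝ, G x ≤ Real.sqrt (((r - w) ^ 2 + i ^ 2) / i ^ 2) := by
    intro x
    apply Real.sqrt_le_sqrt
    rw [div_le_div_iff₀ (hD x) hi2]
    nlinarith [sq_nonneg ((r - w) * (x - r) - i ^ 2)]
  have hGs : G s = Real.sqrt (((r - w) ^ 2 + i ^ 2) / i ^ 2) := by
    have h1 : (s - w) ^ 2 / ((s - r) ^ 2 + i ^ 2) = ((r - w) ^ 2 + i ^ 2) / i ^ 2 := by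
      rw [div_eq_div_iff (hD s).ne' hi2.ne']
      linear_combination (i ^ 2 - (s - r) * (r - w)) * hsrel
    exact congrArg Real.sqrt h1
  -- polynomial identity for comparing values
  have hPid : ∀ x c : ℝ, (c - w) ^ 2 * ((x - r) ^ 2 + i ^ 2) -
      (x - w) ^ 2 * ((c - r) ^ 2 + i ^ 2) =
      (x - c) * (r - w) *
        (2 * (x - w) * (c - w) - ((x - w) + (c - w)) * (s - w)) := by
    intro x c
    linear_combination ((x - c) * ((x - w) + (c - w))) * hsrel
  -- main upper bound when s ∉ [a,b]
  have hmain : ∀ x, x ∈ Set.Icc a b → s ∉ Set.Icc a b → G x ≤ max (G a) (G b) := by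
    intro x hx hns
    obtain ⟨hax, hxb⟩ := hx
    have hcase : s < a ∨ b < s := by
      rcases lt_or_ge s a with h | h
      · exact Or.inl h
      rcases le_or_gt s b with h' | h'
      · exact absurd ⟨h, h'⟩ hns
      · exact Or.inr h'
    rcases hcase with hsa | hbs
    · rcases lt_or_gt_of_ne hp with hpneg | hppos
      · -- r - w < 0 ⟹ s < w
        have hsw : s < w := by nlinarith [hswrel, hi2, sq_nonneg (r - w)]
        rcases le_total x w with hxw | hwx
        · refine le_max_of_le_left (key x a ?_)
          have hbr : 2 * (x - w) * (a - w) - ((x - w) + (a - w)) * (s - w) ≤ 0 := by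
            nlinarith [mul_nonneg (show (0:ℝ) ≤ w - x by linarith)
                (show (0:ℝ) ≤ a - s by linarith),
              mul_nonneg (show (0:ℝ) ≤ w - a by linarith)
                (show (0:ℝ) ≤ x - s by linarith)]
          nlinarith [hPid x a, mul_nonneg (show (0:ℝ) ≤ x - a by linarith)
            (mul_nonneg (show (0:ℝ) ≤ -(r - w) by linarith)
              (show (0:ℝ) ≤ -(2 * (x - w) * (a - w) - ((x - w) + (a - w)) * (s - w)) by linarith))]
        · refine le_max_of_le_right (key x b ?_)
          have hbr : 0 ≤ 2 * (x - w) * (b - w) - ((x - w) + (b - w)) * (s - w) := by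
            nlinarith [mul_nonneg (show (0:ℝ) ≤ x - w by linarith)
                (show (0:ℝ) ≤ b - w by linarith),
              mul_nonneg (show (0:ℝ) ≤ (x - w) + (b - w) by linarith)
                (show (0:ℝ) ≤ w - s by linarith)]
          nlinarith [hPid x b, mul_nonneg (show (0:ℝ) ≤ b - x by linarith)
            (mul_nonneg (show (0:ℝ) ≤ -(r - w) by linarith) hbr)]
      · -- r - w > 0 ⟹ w < s, decreasing on [a,b]
        have hws : w < s := by nlinarith [hswrel, hi2, sq_nonneg (r - w)]
        refine le_max_of_le_left (key x a ?_)
        have hbr : 0 ≤ 2 * (x - w) * (a - w) - ((x - w) + (a - w)) * (s - w) := by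
          nlinarith [mul_nonneg (show (0:ℝ) ≤ x - w by linarith)
              (show (0:ℝ) ≤ a - s by linarith),
            mul_nonneg (show (0:ℝ) ≤ a - w by linarith)
              (show (0:ℝ) ≤ x - s by linarith)]
        nlinarith [hPid x a, mul_nonneg (show (0:ℝ) ≤ x - a by linarith)
          (mul_nonneg (show (0:ℝ) ≤ r - w by linarith) hbr)]
    · rcases lt_or_gt_of_ne hp with hpneg | hppos
      · -- r - w < 0 ⟹ s < w, increasing on [a,b]
        have hsw : s < w := by nlinarith [hswrel, hi2, sq_nonneg (r - w)]
        refine le_max_of_le_right (key x b ?_)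
        have hbr : 0 ≤ 2 * (x - w) * (b - w) - ((x - w) + (b - w)) * (s - w) := by
          nlinarith [mul_nonneg (show (0:ℝ) ≤ w - x by linarith)
              (show (0:ℝ) ≤ s - b by linarith),
            mul_nonneg (show (0:ℝ) ≤ w - b by linarith)
              (show (0:ℝ) ≤ s - x by linarith)]
        nlinarith [hPid x b, mul_nonneg (show (0:ℝ) ≤ b - x by linarith)
          (mul_nonneg (show (0:ℝ) ≤ -(r - w) by linarith) hbr)]
      · -- r - w > 0 ⟹ w < s
        have hws : w < s := by nlinarith [hswrel, hi2, sq_nonneg (r - w)]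
        rcases le_total x w with hxw | hwx
        · refine le_max_of_le_left (key x a ?_)
          have hbr : 0 ≤ 2 * (x - w) * (a - w) - ((x - w) + (a - w)) * (s - w) := by
            nlinarith [mul_nonneg (show (0:ℝ) ≤ w - x by linarith)
                (show (0:ℝ) ≤ w - a by linarith),
              mul_nonneg (show (0:ℝ) ≤ (w - x) + (w - a) by linarith)
                (show (0:ℝ) ≤ s - w by linarith)]
          nlinarith [hPid x a, mul_nonneg (show (0:ℝ) ≤ x - a by linarith)
            (mul_nonneg (show (0:ℝ) ≤ r - w by linarith) hbr)]
        · refine le_max_of_le_right (key x b ?_)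
          have hbr : 2 * (x - w) * (b - w) - ((x - w) + (b - w)) * (s - w) ≤ 0 := by
            nlinarith [mul_nonneg (show (0:ℝ) ≤ x - w by linarith)
                (show (0:ℝ) ≤ s - b by linarith),
              mul_nonneg (show (0:ℝ) ≤ b - w by linarith)
                (show (0:ℝ) ≤ s - x by linarith)]
          nlinarith [hPid x b, mul_nonneg (show (0:ℝ) ≤ b - x by linarith)
            (mul_nonneg (show (0:ℝ) ≤ r - w by linarith)
              (show (0:ℝ) ≤ -(2 * (x - w) * (b - w) - ((x - w) + (b - w)) * (s - w)) by linarith))]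
  -- rewrite the image function and the endpoint values
  have himg : (fun x : ℝ => ‖((x : ℂ) - (w : ℂ)) / ((x : ℂ) - z)‖) '' Set.Icc a b
      = G '' Set.Icc a b := Set.image_congr fun x _ => hFnorm x
  rw [himg, hF a, hF b]
  have hne : (G '' Set.Icc a b).Nonempty := ⟨G a, a, ⟨le_refl a, hab⟩, rfl⟩
  have hbdd : BddAbove (G '' Set.Icc a b) := by
    refine ⟨Real.sqrt (((r - w) ^ 2 + i ^ 2) / i ^ 2), ?_⟩
    rintro y ⟨x, _, rfl⟩
    exact hbound x
  by_cases hmem : s ∈ Set.Icc a b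
  · rw [if_pos hmem, hM]
    apply le_antisymm
    · apply csSup_le hne
      rintro y ⟨x, _, rfl⟩
      exact (hbound x).trans (le_max_right _ _)
    · apply max_le (max_le ?_ ?_) ?_
      · exact le_csSup hbdd ⟨a, ⟨le_refl a, hab⟩, rfl⟩
      · exact le_csSup hbdd ⟨b, ⟨hab, le_refl b⟩, rfl⟩
      · rw [← hGs]
        exact le_csSup hbdd ⟨s, hmem, rfl⟩
  · rw [if_neg hmem]
    rw [max_eq_left (le_trans (Real.sqrt_nonneg _) (le_max_left (G a) (G b)))]
    apply le_antisymm
    · apply csSup_le hne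
      rintro y ⟨x, hx, rfl⟩
      exact hmain x hx hmem
    · apply max_le
      · exact le_csSup hbdd ⟨a, ⟨le_refl a, hab⟩, rfl⟩
      · exact le_csSup hbdd ⟨b, ⟨hab, le_refl b⟩, rfl⟩
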